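/- Symmetric index sum: For any finite simple graph G and injective f : V → ℝ, the symmetric index j_f(x) = (i_f(x) + i_{-f}(x))/2 satisfies Σ_{x∈V} j_f(x) = χ(G). -/

import Mathlib

open Finset SimpleGraph MeasureTheory
open scoped Classical

noncomputable section

variable {V : Type*} [Fintype V] [DecidableEq V]

/-- Number of cliques on `k` vertices in `G`. -/
def cliqueCount (G : SimpleGraph V) (k : ℕ) : ℕ := (G.cliqueFinset k).card

/-- Number of cliques on `k` vertices contained in the unit sphere `S(x)`. -/
def sphereCliques (G : SimpleGraph V) (x : V) (k : ℕ) : ℕ :=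
  ((G.cliqueFinset k).filter fun s => s ⊆ G.neighborFinset x).card

/-- Number of `k`-vertex cliques in the exit set `S_f^-(x)`. -/
def minusCliques (G : SimpleGraph V) (f : V → ℝ) (x : V) (k : ℕ) : ℕ :=
  ((G.cliqueFinset k).filter fun s => s ⊆ G.neighborFinset x ∧ ∀ y ∈ s, f y < f x).card

/-- Number of `k`-vertex cliques in the entrance set `S_f^+(x)`. -/
def plusCliques (G : SimpleGraph V) (f : V → ℝ) (x : V) (k : ℕ) : ℕ :=
  ((G.cliqueFinset k).filter fun s => s ⊆ G.neighborFinset x ∧ ∀ y ∈ s, f x < f y).card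

/-- Number of `k`-vertex cliques in `S(x)` with vertices both below and above `f x`. -/
def mixedCliques (G : SimpleGraph V) (f : V → ℝ) (x : V) (k : ℕ) : ℕ :=
  ((G.cliqueFinset k).filter fun s =>
    s ⊆ G.neighborFinset x ∧ (∃ y ∈ s, f y < f x) ∧ (∃ z ∈ s, f x < f z)).card

/-- Euler characteristic `χ(G) = Σ_k (-1)^k v_k`. -/
def eulerChar (G : SimpleGraph V) : ℤ :=
  ∑ k ∈ Finset.range (Fintype.card V + 1), (-1 : ℤ) ^ k * cliqueCount G (k + 1)

/-- Euler characteristic of the exit set `S_f^-(x)`. -/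
def chiMinus (G : SimpleGraph V) (f : V → ℝ) (x : V) : ℤ :=
  ∑ k ∈ Finset.range (Fintype.card V + 1), (-1 : ℤ) ^ k * minusCliques G f x (k + 1)

/-- Poincaré–Hopf index `i_f(x) = 1 - χ(S_f^-(x))`. -/
def pindex (G : SimpleGraph V) (f : V → ℝ) (x : V) : ℤ := 1 - chiMinus G f x

/-- Symmetric index `j_f(x) = (i_f(x) + i_{-f}(x))/2`. -/
def symIndex (G : SimpleGraph V) (f : V → ℝ) (x : V) : ℚ :=
  ((pindex G f x : ℚ) + (pindex G (-f) x : ℚ)) / 2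

/-- Curvature `K(x) = Σ_k (-1)^k V_{k-1}(x)/(k+1)`. -/
def curvature (G : SimpleGraph V) (x : V) : ℚ :=
  ∑ k ∈ Finset.range (Fintype.card V + 1),
    (-1 : ℚ) ^ k * (sphereCliques G x k : ℚ) / (k + 1)

/-- The uniform probability measure on `[-1,1]`. -/
def unif : Measure ℝ := (2 : ENNReal)⁻¹ • volume.restrict (Set.Icc (-1 : ℝ) 1)

/-- The product measure on `V → ℝ` with i.i.d. uniform `[-1,1]` coordinates. -/
def uniMeasure (V : Type*) [Fintype V] : Measure (V → ℝ) := Measure.pi fun _ => unif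


lemma sum_minusCliques (G : SimpleGraph V) (f : V → ℝ) (hf : Function.Injective f) (k : ℕ) :
    ∑ x : V, minusCliques G f x (k + 1) = cliqueCount G (k + 2) := by
  classical
  unfold minusCliques cliqueCount
  rw [← Finset.card_sigma]
  apply Finset.card_bij (fun p _ => insert p.1 p.2)
  · rintro ⟨x, s⟩ hp
    simp only [Finset.mem_sigma, Finset.mem_filter, SimpleGraph.mem_cliqueFinset_iff] at hp
    obtain ⟨-, hs, hsub, hlt⟩ := hp
    rw [SimpleGraph.mem_cliqueFinset_iff]
    exact hs.insert fun b hb => (G.mem_neighborFinset x b).mp (hsub hb)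
  · rintro ⟨x, s⟩ hp ⟨x', s'⟩ hp' h
    simp only [Finset.mem_sigma, Finset.mem_filter, SimpleGraph.mem_cliqueFinset_iff] at hp hp'
    obtain ⟨-, hs, hsub, hlt⟩ := hp
    obtain ⟨-, hs', hsub', hlt'⟩ := hp'
    have hxs : x ∉ s := fun hx => lt_irrefl _ (hlt x hx)
    have hxs' : x' ∉ s' := fun hx => lt_irrefl _ (hlt' x' hx)
    have hxx : x = x' := by
      by_contra hne
      have h1 : x ∈ insert x' s' := h ▸ Finset.mem_insert_self x s
      have h2 : x' ∈ insert x s := h.symm ▸ Finset.mem_insert_self x' s'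
      rw [Finset.mem_insert] at h1 h2
      have hx1 : x ∈ s' := h1.resolve_left hne
      have hx2 : x' ∈ s := h2.resolve_left (Ne.symm hne)
      exact absurd (hlt' x hx1) (not_lt.mpr (hlt x' hx2).le)
    subst hxx
    have hss : s = s' := by
      have := congrArg (fun t => Finset.erase t x) h
      simpa [Finset.erase_insert hxs, Finset.erase_insert hxs'] using this
    simp [hss]
  · intro t ht
    rw [SimpleGraph.mem_cliqueFinset_iff] at ht
    have hne : t.Nonempty := by
      rw [← Finset.card_pos, ht.card_eq]; omega
    obtain ⟨x, hx, hmax⟩ := Finset.exists_max_image t f hne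
    refine ⟨⟨x, t.erase x⟩, ?_, ?_⟩
    · simp only [Finset.mem_sigma, Finset.mem_filter, SimpleGraph.mem_cliqueFinset_iff,
        Finset.mem_univ, true_and]
      refine ⟨⟨ht.1.subset (Finset.erase_subset _ _), ?_⟩, ?_, ?_⟩
      · rw [Finset.card_erase_of_mem hx, ht.card_eq]; omega
      · intro y hy
        rw [Finset.mem_erase] at hy
        rw [G.mem_neighborFinset]
        exact ht.1 hx hy.2 (Ne.symm hy.1)
      · intro y hy
        rw [Finset.mem_erase] at hy
        exact lt_of_le_of_ne (hmax y hy.2) fun h => hy.1 (hf h)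
    · exact Finset.insert_erase hx

lemma cliqueCount_one (G : SimpleGraph V) : cliqueCount G 1 = Fintype.card V := by
  classical
  have himg : G.cliqueFinset 1 = Finset.univ.image (fun a : V => ({a} : Finset V)) := by
    ext s
    simp [SimpleGraph.mem_cliqueFinset_iff, SimpleGraph.isNClique_one, eq_comm]
  unfold cliqueCount
  rw [himg, Finset.card_image_of_injective _ fun a b h => by simpa using h]
  simp

lemma cliqueCount_big (G : SimpleGraph V) : cliqueCount G (Fintype.card V + 2) = 0 := by
  classical
  unfold cliqueCount
  rw [Finset.card_eq_zero, Finset.eq_empty_iff_forall_notMem]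
  intro s hs
  rw [SimpleGraph.mem_cliqueFinset_iff] at hs
  have := Finset.card_le_univ s
  rw [hs.card_eq] at this
  omega

lemma aux_sum (n : ℕ) (v : ℕ → ℤ) (h1 : v 1 = n) (hbig : v (n + 2) = 0) :
    (n : ℤ) - ∑ k ∈ Finset.range (n + 1), (-1) ^ k * v (k + 2)
      = ∑ k ∈ Finset.range (n + 1), (-1) ^ k * v (k + 1) := by
  rw [Finset.sum_range_succ' (fun k => (-1 : ℤ) ^ k * v (k + 1)) n,
    Finset.sum_range_succ (fun k => (-1 : ℤ) ^ k * v (k + 2)) n]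
  have h2 : ∀ k, (-1 : ℤ) ^ (k + 1) * v (k + 1 + 1) = -((-1) ^ k * v (k + 2)) := by
    intro k
    rw [show k + 1 + 1 = k + 2 from rfl]
    ring
  simp only [h2, hbig, h1, mul_zero, add_zero, pow_zero, one_mul, Finset.sum_neg_distrib]
  ring

lemma poincare_hopf (G : SimpleGraph V) (f : V → ℝ) (hf : Function.Injective f) :
    ∑ x : V, pindex G f x = eulerChar G := by
  classical
  unfold pindex chiMinus
  rw [Finset.sum_sub_distrib, Finset.sum_const, Finset.card_univ, nsmul_eq_mul, mul_one,
    Finset.sum_comm]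
  have key : ∀ k, ∑ x : V, ((-1 : ℤ) ^ k * (minusCliques G f x (k + 1) : ℤ))
      = (-1 : ℤ) ^ k * (cliqueCount G (k + 2) : ℤ) := by
    intro k
    rw [← Finset.mul_sum, ← Nat.cast_sum, sum_minusCliques G f hf k]
  simp only [key]
  unfold eulerChar
  exact aux_sum (Fintype.card V) (fun m => (cliqueCount G m : ℤ))
    (by simp [cliqueCount_one]) (by simp [cliqueCount_big])

/-- The symmetric index `j_f(x) = (i_f(x)+i_{-f}(x))/2` also sums to `χ(G)`. -/
theorem symmetric_index_sum (G : SimpleGraph V) (f : V → ℝ)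
    (hf : Function.Injective f) :
    ∑ x : V, symIndex G f x = (eulerChar G : ℚ) := by
  have hnf : Function.Injective (-f) := fun a b h => hf (by
    have : -f a = -f b := h
    simpa using congrArg Neg.neg this)
  unfold symIndex
  rw [← Finset.sum_div, Finset.sum_add_distrib]
  have h1 : ∑ x : V, (pindex G f x : ℚ) = (eulerChar G : ℚ) := by
    rw [← Int.cast_sum, poincare_hopf G f hf]
  have h2 : ∑ x : V, (pindex G (-f) x : ℚ) = (eulerChar G : ℚ) := by
    rw [← Int.cast_sum, poincare_hopf G (-f) hnf]
  rw [h1, h2]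
  ring

end
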